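/- Let C be an [n, k, n−k] near-MDS code over F_q with weight distribution (A_0, …, A_n). Then for each s ∈ {1, …, k}, A_{n−k+s} = C(n, k−s) · Σ_{j=0}^{s−1} (−1)^j C(n−k+s, j)(q^{s−j} − 1) + (−1)^s C(k, s) A_{n−k}. -/

import Mathlib

open Finset

/-- Number of `m`-subsets of `univ` containing a given set `S`. -/
lemma auxNMDS_superset_count {α : Type*} [Fintype α] [DecidableEq α] (S : Finset α) (m : ℕ)
    (h : S.card ≤ m) :
    ((Finset.powersetCard m (Finset.univ : Finset α)).filter (fun T => S ⊆ T)).card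
      = (Fintype.card α - S.card).choose (m - S.card) := by
  rw [← Finset.card_compl S, ← Finset.card_powersetCard]
  apply Finset.card_nbij' (fun T => T \ S) (fun U => U ∪ S)
  · intro T hT
    simp only [Finset.mem_coe, Finset.mem_filter, Finset.mem_powersetCard] at hT
    obtain ⟨⟨_, hcard⟩, hST⟩ := hT
    simp only [Finset.mem_coe, Finset.mem_powersetCard]
    constructor
    · intro a ha
      simp only [Finset.mem_sdiff] at ha
      simp [Finset.mem_compl, ha.2]
    · rw [Finset.card_sdiff_of_subset hST, hcard]
  · intro U hU
    simp only [Finset.mem_coe, Finset.mem_powersetCard] at hU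
    obtain ⟨hUc, hUcard⟩ := hU
    have hdisj : Disjoint U S := by
      rw [Finset.disjoint_left]
      intro a haU haS
      have := hUc haU
      simp [Finset.mem_compl] at this
      exact this haS
    simp only [Finset.mem_coe, Finset.mem_filter, Finset.mem_powersetCard]
    refine ⟨⟨Finset.subset_univ _, ?_⟩, Finset.subset_union_right⟩
    rw [Finset.card_union_of_disjoint hdisj, hUcard]
    have hS : S.card ≤ Fintype.card α := Finset.card_le_univ S
    have hm : m ≤ Fintype.card α := by
      calc m = (m - S.card) + S.card := by omega
      _ ≤ Sᶜ.card + S.card := by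
          have := Finset.card_le_card hUc
          omega
      _ = Fintype.card α := by rw [Finset.card_compl]; omega
    omega
  · intro T hT
    simp only [Finset.mem_coe, Finset.mem_filter] at hT
    exact Finset.sdiff_union_of_subset hT.2
  · intro U hU
    simp only [Finset.mem_coe, Finset.mem_powersetCard] at hU
    ext a
    simp only [Finset.mem_sdiff, Finset.mem_union]
    constructor
    · rintro ⟨h1 | h1, h2⟩
      · exact h1
      · exact absurd h1 h2
    · intro ha
      have := hU.1 ha
      simp only [Finset.mem_compl] at this
      exact ⟨Or.inl ha, this⟩

/-- Core alternating binomial identity. -/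
lemma auxNMDS_alt (K S : ℕ) (hS : 1 ≤ S) (hSK : S ≤ K) :
    ∑ u ∈ Finset.range (S + 1),
      (-1 : ℤ) ^ u * ((K.choose u : ℤ) * ((K - u).choose (S - u) : ℤ)) = 0 := by
  have hcong : ∀ u ∈ Finset.range (S + 1),
      (-1 : ℤ) ^ u * ((K.choose u : ℤ) * ((K - u).choose (S - u) : ℤ))
        = (K.choose S : ℤ) * ((-1) ^ u * (S.choose u : ℤ)) := by
    intro u hu
    have hu' : u ≤ S := by simpa [Nat.lt_succ_iff] using hu
    have h := Nat.choose_mul (n := K) (k := S) (s := u) hu'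
    have h' : (K.choose u : ℤ) * ((K - u).choose (S - u) : ℤ)
        = (K.choose S : ℤ) * (S.choose u : ℤ) := by
      exact_mod_cast congrArg (Nat.cast : ℕ → ℤ) h.symm
    rw [h']; ring
  rw [Finset.sum_congr rfl hcong, ← Finset.mul_sum, Int.alternating_sum_range_choose,
    if_neg (by omega), mul_zero]

/-- Double sum reindexing. -/
lemma auxNMDS_swap {M : Type*} [AddCommMonoid M] (s : ℕ) (f : ℕ → ℕ → M) :
    ∑ i ∈ Finset.range (s + 1), ∑ j ∈ Finset.range i, f i j
      = ∑ r ∈ Finset.range s, ∑ u ∈ Finset.range (s - r), f (r + 1 + u) u := by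
  rw [Finset.sum_sigma', Finset.sum_sigma']
  refine Finset.sum_nbij' (fun p => ⟨p.1 - p.2 - 1, p.2⟩) (fun p => ⟨p.1 + 1 + p.2, p.2⟩)
    ?_ ?_ ?_ ?_ ?_
  · rintro ⟨i, j⟩ hp
    simp only [Finset.mem_sigma, Finset.mem_range] at hp ⊢
    omega
  · rintro ⟨r, u⟩ hp
    simp only [Finset.mem_sigma, Finset.mem_range] at hp ⊢
    omega
  · rintro ⟨i, j⟩ hp
    simp only [Finset.mem_sigma, Finset.mem_range] at hp
    simp only [Sigma.mk.inj_iff, heq_eq_eq, and_true]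
    omega
  · rintro ⟨r, u⟩ hp
    simp only [Finset.mem_sigma, Finset.mem_range] at hp
    simp only [Sigma.mk.inj_iff, heq_eq_eq, and_true]
    omega
  · rintro ⟨i, j⟩ hp
    simp only [Finset.mem_sigma, Finset.mem_range] at hp
    have : i - j - 1 + 1 + j = i := by omega
    simp only [this]


lemma auxNMDS_card_module (F M : Type*) [Field F] [Fintype F] [AddCommGroup M] [Module F M]
    [Finite M] : Nat.card M = Fintype.card F ^ Module.finrank F M := by
  cases nonempty_fintype M
  rw [Nat.card_eq_fintype_card, Module.card_eq_pow_finrank (K := F)]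

lemma auxNMDS_shortened (q n k : ℕ) (F : Type) [Field F] [Fintype F] [DecidableEq F]
    (hq : Fintype.card F = q)
    (C : Submodule F (Fin n → F))
    (hdim : Module.finrank F C = k)
    (hk : 1 ≤ k) (hkn : k ≤ n)
    (hdual1 : ∀ u : Fin n → F, (∀ c ∈ C, ∑ i, u i * c i = 0) → u ≠ 0 →
      k ≤ hammingNorm u)
    (s : ℕ) (hs : 1 ≤ s) (hsk : s ≤ k)
    (T : Finset (Fin n)) (hT : T.card = n - k + s) :
    Nat.card {c : Fin n → F // c ∈ C ∧ ∀ i ∉ T, c i = 0} = q ^ s := by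
  classical
  set ι := {i : Fin n // i ∈ Tᶜ} with hι
  have hTn : T.card ≤ n := by
    have := Finset.card_le_univ T
    simpa using this
  have hcard_ι : Fintype.card ι = k - s := by
    simp only [hι, Fintype.card_coe, Finset.card_compl, Fintype.card_fin]
    omega
  set π : (Fin n → F) →ₗ[F] (ι → F) := LinearMap.funLeft F F (fun j : ι => (j : Fin n)) with hπ
  set ψ : C →ₗ[F] (ι → F) := π.comp C.subtype with hψ
  have hψ_apply : ∀ (c : C) (j : ι), ψ c j = (c : Fin n → F) j := fun c j => rfl
  -- expansion of a functional
  have hexp : ∀ (f : (ι → F) →ₗ[F] F) (x : ι → F),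
      f x = ∑ j : ι, x j * f (Pi.single j 1) := by
    intro f x
    conv_lhs => rw [← Finset.univ_sum_single x]
    rw [map_sum]
    refine Finset.sum_congr rfl fun j _ => ?_
    have h1 : Pi.single j (x j) = x j • (Pi.single j (1 : F) : ι → F) := by
      funext j'
      by_cases h : j' = j
      · subst h; simp
      · simp [Pi.single_eq_of_ne h]
    rw [h1, map_smul, smul_eq_mul]
  -- surjectivity of ψ
  have hsurj : LinearMap.range ψ = ⊤ := by
    by_contra hne
    have hlt : LinearMap.range ψ < ⊤ := lt_top_iff_ne_top.mpr hne
    obtain ⟨f, hf0, hfbot⟩ :=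
      Submodule.exists_dual_map_eq_bot_of_lt_top hlt inferInstance
    set u : Fin n → F := fun i => if h : i ∈ Tᶜ then f (Pi.single (⟨i, h⟩ : ι) 1) else 0
      with hu
    have hu_val : ∀ j : ι, u (j : Fin n) = f (Pi.single j 1) := by
      intro j
      simp only [hu, dif_pos j.2]; rfl
    have horth : ∀ c ∈ C, ∑ i, u i * c i = 0 := by
      intro c hc
      have hz : f (ψ ⟨c, hc⟩) = 0 := by
        have hmem : ψ ⟨c, hc⟩ ∈ LinearMap.range ψ := ⟨_, rfl⟩
        have h2 : f (ψ ⟨c, hc⟩) ∈ (LinearMap.range ψ).map f := Submodule.mem_map_of_mem hmem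
        rwa [hfbot, Submodule.mem_bot] at h2
      calc ∑ i, u i * c i = ∑ i ∈ Tᶜ, u i * c i := by
            refine (Finset.sum_subset (Finset.subset_univ _) ?_).symm
            intro i _ hi
            have hz0 : u i = 0 := by simp only [hu]; rw [dif_neg hi]
            rw [hz0, zero_mul]
        _ = ∑ j : ι, u (j : Fin n) * c (j : Fin n) := (Finset.sum_coe_sort _ _).symm
        _ = ∑ j : ι, (ψ ⟨c, hc⟩) j * f (Pi.single j 1) := by
            refine Finset.sum_congr rfl fun j _ => ?_
            rw [hu_val j, hψ_apply, mul_comm]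
        _ = f (ψ ⟨c, hc⟩) := (hexp f _).symm
        _ = 0 := hz
    have hune : u ≠ 0 := by
      obtain ⟨x, hx⟩ : ∃ x, f x ≠ 0 := by
        by_contra h
        push_neg at h
        exact hf0 (LinearMap.ext h)
      have hj : ∃ j : ι, f (Pi.single j 1) ≠ 0 := by
        by_contra h
        push_neg at h
        apply hx
        rw [hexp f x]
        simp [h]
      obtain ⟨j, hj⟩ := hj
      intro h0
      apply hj
      rw [← hu_val j, h0]
      rfl
    have hnorm : hammingNorm u ≤ k - s := by
      have hsub : ({i | u i ≠ 0} : Finset (Fin n)) ⊆ Tᶜ := by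
        intro i hi
        simp only [Finset.mem_filter, Finset.mem_univ, true_and] at hi
        by_contra hiT
        apply hi
        simp only [hu]
        rw [dif_neg hiT]
      calc hammingNorm u ≤ Tᶜ.card := Finset.card_le_card hsub
        _ = k - s := by
            rw [Finset.card_compl, Fintype.card_fin]
            omega
    have := hdual1 u horth hune
    omega
  -- rank computation
  have hrank : Module.finrank F (LinearMap.ker ψ) = s := by
    have h1 := LinearMap.finrank_range_add_finrank_ker ψ
    rw [hsurj, finrank_top, Module.finrank_fintype_fun_eq_card, hcard_ι, hdim] at h1
    omega
  have hker_card : Nat.card (LinearMap.ker ψ) = q ^ s := by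
    rw [auxNMDS_card_module F (LinearMap.ker ψ), hrank, hq]
  rw [← hker_card]
  apply Nat.card_congr
  refine ⟨fun c => ⟨⟨c.1, c.2.1⟩, ?_⟩, fun x => ⟨x.1.1, x.1.2, fun i hi => ?_⟩, ?_, ?_⟩
  · rw [LinearMap.mem_ker]
    funext j
    exact c.2.2 j (Finset.mem_compl.mp j.2)
  · have hx := x.2
    rw [LinearMap.mem_ker] at hx
    have := congrFun hx (⟨i, Finset.mem_compl.mpr hi⟩ : ι)
    exact this
  · intro c; rfl
  · intro x; rfl



lemma auxNMDS_natcard_filter {α : Type*} [Fintype α] (p : α → Prop) [DecidablePred p] :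
    Nat.card {x // p x} = (Finset.univ.filter p).card := by
  simp [Nat.card_eq_fintype_card, Fintype.card_subtype]


lemma auxNMDS_count (q n k : ℕ) (F : Type) [Field F] [Fintype F] [DecidableEq F]
    (hq : Fintype.card F = q)
    (C : Submodule F (Fin n → F))
    (hdim : Module.finrank F C = k)
    (hk : 1 ≤ k) (hkn : k ≤ n) (hnk : k < n)
    (hd1 : ∀ c ∈ C, c ≠ 0 → n - k ≤ hammingNorm c)
    (hdual1 : ∀ u : Fin n → F, (∀ c ∈ C, ∑ i, u i * c i = 0) → u ≠ 0 →
      k ≤ hammingNorm u)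
    (A : ℕ → ℕ)
    (hA : ∀ i, A i = Nat.card {c : Fin n → F // c ∈ C ∧ hammingNorm c = i})
    (s : ℕ) (hs : 1 ≤ s) (hsk : s ≤ k) :
    n.choose (n - k + s) * (q ^ s - 1)
      = ∑ i ∈ Finset.range (s + 1), A (n - k + i) * ((k - i).choose (s - i)) := by
  classical
  obtain ⟨m, hm⟩ : ∃ m, m = n - k + s := ⟨_, rfl⟩
  rw [← hm]
  have hmn : m ≤ n := by omega
  -- Step A: per-T cardinality
  have hTcount : ∀ T ∈ Finset.powersetCard m (Finset.univ : Finset (Fin n)),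
      (Finset.univ.filter
        (fun c : Fin n → F => (c ∈ C ∧ ∀ i ∉ T, c i = 0) ∧ c ≠ 0)).card = q ^ s - 1 := by
    intro T hT
    have hTcard : T.card = m := (Finset.mem_powersetCard.mp hT).2
    have h1 : (Finset.univ.filter (fun c : Fin n → F => c ∈ C ∧ ∀ i ∉ T, c i = 0)).card
        = q ^ s := by
      rw [← auxNMDS_natcard_filter]
      exact auxNMDS_shortened q n k F hq C hdim hk hkn hdual1 s hs hsk T (hTcard.trans hm)
    have h0mem : (0 : Fin n → F) ∈
        Finset.univ.filter (fun c : Fin n → F => c ∈ C ∧ ∀ i ∉ T, c i = 0) := by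
      simp [Submodule.zero_mem]
    have h2 : Finset.univ.filter
          (fun c : Fin n → F => (c ∈ C ∧ ∀ i ∉ T, c i = 0) ∧ c ≠ 0)
        = (Finset.univ.filter (fun c : Fin n → F => c ∈ C ∧ ∀ i ∉ T, c i = 0)).erase 0 := by
      ext c
      simp only [Finset.mem_filter, Finset.mem_univ, true_and, Finset.mem_erase]
      tauto
    rw [h2, Finset.card_erase_of_mem h0mem, h1]
  -- Step D: per-fiber value
  have hsuppcard : ∀ c : Fin n → F, ({i | c i ≠ 0} : Finset (Fin n)).card = hammingNorm c :=
    fun c => rfl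
  have hfival : ∀ t ∈ Finset.range (n + 1),
      (∑ c ∈ (Finset.univ.filter (fun c : Fin n → F => c ∈ C ∧ c ≠ 0)).filter
          (fun c => hammingNorm c = t),
          ((Finset.powersetCard m (Finset.univ : Finset (Fin n))).filter
            (fun T => ({i | c i ≠ 0} : Finset (Fin n)) ⊆ T)).card)
        = if n - k ≤ t ∧ t ≤ m then A t * ((n - t).choose (m - t)) else 0 := by
    intro t ht
    rw [Finset.mem_range, Nat.lt_succ_iff] at ht
    by_cases h1 : n - k ≤ t ∧ t ≤ m
    · rw [if_pos h1]
      have hterm : ∀ c ∈ (Finset.univ.filter (fun c : Fin n → F => c ∈ C ∧ c ≠ 0)).filter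
          (fun c => hammingNorm c = t),
          ((Finset.powersetCard m (Finset.univ : Finset (Fin n))).filter
            (fun T => ({i | c i ≠ 0} : Finset (Fin n)) ⊆ T)).card
          = (n - t).choose (m - t) := by
        intro c hc
        simp only [Finset.mem_filter] at hc
        have hw : hammingNorm c = t := hc.2
        rw [auxNMDS_superset_count _ m (by rw [hsuppcard, hw]; exact h1.2)]
        rw [hsuppcard, hw, Fintype.card_fin]
      rw [Finset.sum_congr rfl hterm, Finset.sum_const, smul_eq_mul]
      congr 1
      -- fiber card = A t
      have ht1 : 1 ≤ t := by omega
      rw [hA t, auxNMDS_natcard_filter]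
      congr 1
      ext c
      simp only [Finset.mem_filter, Finset.mem_univ, true_and]
      constructor
      · rintro ⟨⟨hcC, _⟩, hw⟩
        exact ⟨hcC, hw⟩
      · rintro ⟨hcC, hw⟩
        refine ⟨⟨hcC, ?_⟩, hw⟩
        intro hc0
        rw [hc0, hammingNorm_zero] at hw
        omega
    · rw [if_neg h1]
      rcases not_and_or.mp h1 with h2 | h2
      · -- no codewords of weight t
        have : (Finset.univ.filter (fun c : Fin n → F => c ∈ C ∧ c ≠ 0)).filter
            (fun c => hammingNorm c = t) = ∅ := by
          ext c
          simp only [Finset.mem_filter, Finset.mem_univ, true_and, Finset.notMem_empty,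
            iff_false]
          rintro ⟨⟨hcC, hc0⟩, hw⟩
          exact h2 (hw ▸ hd1 c hcC hc0)
        rw [this, Finset.sum_empty]
      · -- weight too large: no supersets
        refine Finset.sum_eq_zero fun c hc => ?_
        simp only [Finset.mem_filter] at hc
        rw [Finset.card_eq_zero]
        ext T
        simp only [Finset.mem_filter, Finset.mem_powersetCard, Finset.notMem_empty, iff_false]
        rintro ⟨⟨_, hTcard⟩, hsub⟩
        have := Finset.card_le_card hsub
        rw [hsuppcard, hc.2, hTcard] at this
        omega
  -- Step E: collapse
  have hcollapse : ∑ t ∈ Finset.range (n + 1),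
      (if n - k ≤ t ∧ t ≤ m then A t * ((n - t).choose (m - t)) else 0)
      = ∑ i ∈ Finset.range (s + 1), A (n - k + i) * ((k - i).choose (s - i)) := by
    rw [← Finset.sum_filter]
    have hfe : (Finset.range (n + 1)).filter (fun t => n - k ≤ t ∧ t ≤ m)
        = Finset.Icc (n - k) m := by
      ext t
      simp only [Finset.mem_filter, Finset.mem_range, Finset.mem_Icc]
      omega
    rw [hfe]
    refine Finset.sum_nbij' (fun t => t - (n - k)) (fun i => n - k + i) ?_ ?_ ?_ ?_ ?_
    · intro t ht
      rw [Finset.mem_Icc] at ht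
      rw [Finset.mem_range]
      omega
    · intro i hi
      rw [Finset.mem_range] at hi
      rw [Finset.mem_Icc]
      omega
    · intro t ht
      rw [Finset.mem_Icc] at ht
      omega
    · intro i hi
      rw [Finset.mem_range] at hi
      omega
    · intro t ht
      rw [Finset.mem_Icc] at ht
      have e1 : n - k + (t - (n - k)) = t := by omega
      have e2 : k - (t - (n - k)) = n - t := by omega
      have e3 : s - (t - (n - k)) = m - t := by omega
      rw [e1, e2, e3]
  -- Step B: swap
  have hswap : ∑ T ∈ Finset.powersetCard m (Finset.univ : Finset (Fin n)),
      (Finset.univ.filter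
        (fun c : Fin n → F => (c ∈ C ∧ ∀ i ∉ T, c i = 0) ∧ c ≠ 0)).card
      = ∑ c ∈ Finset.univ.filter (fun c : Fin n → F => c ∈ C ∧ c ≠ 0),
          ((Finset.powersetCard m (Finset.univ : Finset (Fin n))).filter
            (fun T => ({i | c i ≠ 0} : Finset (Fin n)) ⊆ T)).card := by
    calc ∑ T ∈ Finset.powersetCard m (Finset.univ : Finset (Fin n)),
        (Finset.univ.filter
          (fun c : Fin n → F => (c ∈ C ∧ ∀ i ∉ T, c i = 0) ∧ c ≠ 0)).card
        = ∑ T ∈ Finset.powersetCard m (Finset.univ : Finset (Fin n)),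
            ∑ c ∈ (Finset.univ : Finset (Fin n → F)),
              ite ((c ∈ C ∧ ∀ i ∉ T, c i = 0) ∧ c ≠ 0) 1 0 := by
          exact Finset.sum_congr rfl fun T _ => Finset.card_filter _ _
      _ = ∑ c ∈ (Finset.univ : Finset (Fin n → F)),
            ∑ T ∈ Finset.powersetCard m (Finset.univ : Finset (Fin n)),
              ite ((c ∈ C ∧ ∀ i ∉ T, c i = 0) ∧ c ≠ 0) 1 0 := Finset.sum_comm
      _ = ∑ c ∈ (Finset.univ : Finset (Fin n → F)),
            ite (c ∈ C ∧ c ≠ 0)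
              ((Finset.powersetCard m (Finset.univ : Finset (Fin n))).filter
                (fun T => ({i | c i ≠ 0} : Finset (Fin n)) ⊆ T)).card 0 := by
          refine Finset.sum_congr rfl fun c _ => ?_
          have hsupp : ∀ T : Finset (Fin n),
              (({i | c i ≠ 0} : Finset (Fin n)) ⊆ T) ↔ (∀ i ∉ T, c i = 0) := by
            intro T
            constructor
            · intro hsub i hiT
              by_contra hne
              exact hiT (hsub (by simp [hne]))
            · intro h i hi
              simp only [Finset.mem_filter, Finset.mem_univ, true_and] at hi
              by_contra hiT
              exact hi (h i hiT)
          by_cases hc : c ∈ C ∧ c ≠ 0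
          · rw [if_pos hc, Finset.card_filter]
            refine Finset.sum_congr rfl fun T _ => ?_
            refine if_congr ?_ rfl rfl
            rw [hsupp T]
            tauto
          · rw [if_neg hc]
            refine Finset.sum_eq_zero fun T _ => ?_
            rw [if_neg]
            tauto
      _ = ∑ c ∈ Finset.univ.filter (fun c : Fin n → F => c ∈ C ∧ c ≠ 0),
            ((Finset.powersetCard m (Finset.univ : Finset (Fin n))).filter
              (fun T => ({i | c i ≠ 0} : Finset (Fin n)) ⊆ T)).card :=
          (Finset.sum_filter _ _).symm
  -- Step C: fiberwise by weight
  have hfib : ∑ c ∈ Finset.univ.filter (fun c : Fin n → F => c ∈ C ∧ c ≠ 0),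
      ((Finset.powersetCard m (Finset.univ : Finset (Fin n))).filter
        (fun T => ({i | c i ≠ 0} : Finset (Fin n)) ⊆ T)).card
      = ∑ t ∈ Finset.range (n + 1),
          ∑ c ∈ (Finset.univ.filter (fun c : Fin n → F => c ∈ C ∧ c ≠ 0)).filter
            (fun c => hammingNorm c = t),
            ((Finset.powersetCard m (Finset.univ : Finset (Fin n))).filter
              (fun T => ({i | c i ≠ 0} : Finset (Fin n)) ⊆ T)).card := by
    refine (Finset.sum_fiberwise_of_maps_to (fun c _ => ?_) _).symm
    rw [Finset.mem_range, Nat.lt_succ_iff]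
    calc hammingNorm c ≤ Fintype.card (Fin n) := hammingNorm_le_card_fintype
      _ = n := Fintype.card_fin n
  -- combine
  have hL : ∑ T ∈ Finset.powersetCard m (Finset.univ : Finset (Fin n)),
      (Finset.univ.filter
        (fun c : Fin n → F => (c ∈ C ∧ ∀ i ∉ T, c i = 0) ∧ c ≠ 0)).card
      = n.choose m * (q ^ s - 1) := by
    rw [Finset.sum_congr rfl hTcount, Finset.sum_const, smul_eq_mul,
      Finset.card_powersetCard, Finset.card_univ, Fintype.card_fin]
  rw [← hL, hswap, hfib, Finset.sum_congr rfl hfival, hcollapse]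




/-- The key binomial identity for the q-part. -/
lemma auxNMDS_keyQ (q n k s : ℕ) (hs : 1 ≤ s) (hsk : s ≤ k) (hkn : k ≤ n) :
    ∑ i ∈ Finset.range (s + 1), (n.choose (k - i) : ℤ) *
        (∑ j ∈ Finset.range i,
          (-1 : ℤ) ^ j * ((n - k + i).choose j : ℤ) * ((q : ℤ) ^ (i - j) - 1)) *
        ((k - i).choose (s - i) : ℤ)
      = (n.choose (k - s) : ℤ) * ((q : ℤ) ^ s - 1) := by
  have step1 : ∑ i ∈ Finset.range (s + 1), (n.choose (k - i) : ℤ) *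
        (∑ j ∈ Finset.range i,
          (-1 : ℤ) ^ j * ((n - k + i).choose j : ℤ) * ((q : ℤ) ^ (i - j) - 1)) *
        ((k - i).choose (s - i) : ℤ)
      = ∑ i ∈ Finset.range (s + 1), ∑ j ∈ Finset.range i,
          (n.choose (k - i) : ℤ) *
            ((-1 : ℤ) ^ j * ((n - k + i).choose j : ℤ) * ((q : ℤ) ^ (i - j) - 1)) *
            ((k - i).choose (s - i) : ℤ) := by
    refine Finset.sum_congr rfl fun i _ => ?_
    rw [Finset.mul_sum, Finset.sum_mul]
  rw [step1, auxNMDS_swap]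
  have inner : ∀ r ∈ Finset.range s,
      (∑ u ∈ Finset.range (s - r),
        (n.choose (k - (r + 1 + u)) : ℤ) *
          ((-1 : ℤ) ^ u * ((n - k + (r + 1 + u)).choose u : ℤ) *
            ((q : ℤ) ^ ((r + 1 + u) - u) - 1)) *
          ((k - (r + 1 + u)).choose (s - (r + 1 + u)) : ℤ))
      = if r = s - 1 then (n.choose (k - s) : ℤ) * ((q : ℤ) ^ s - 1) else 0 := by
    intro r hr
    rw [Finset.mem_range] at hr
    have hterm : ∀ u ∈ Finset.range (s - r),
        (n.choose (k - (r + 1 + u)) : ℤ) *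
          ((-1 : ℤ) ^ u * ((n - k + (r + 1 + u)).choose u : ℤ) *
            ((q : ℤ) ^ ((r + 1 + u) - u) - 1)) *
          ((k - (r + 1 + u)).choose (s - (r + 1 + u)) : ℤ)
        = ((q : ℤ) ^ (r + 1) - 1) * (n.choose (k - r - 1) : ℤ) *
            ((-1 : ℤ) ^ u * (((k - r - 1).choose u : ℤ) *
              (((k - r - 1) - u).choose ((s - r - 1) - u) : ℤ))) := by
      intro u hu
      rw [Finset.mem_range] at hu
      have hu' : u ≤ s - r - 1 := by omega
      have hik : r + 1 + u ≤ k := by omega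
      have he1 : (r + 1 + u) - u = r + 1 := by omega
      have he2 : k - (r + 1 + u) = (k - r - 1) - u := by omega
      have he3 : s - (r + 1 + u) = (s - r - 1) - u := by omega
      -- trinomial revision
      have htri : n.choose (k - (r + 1 + u)) * ((n - k + (r + 1 + u)).choose u)
          = n.choose (k - r - 1) * ((k - r - 1).choose u) := by
        have h1 : k - r - 1 ≤ n := by omega
        have h2 : k - (r + 1 + u) ≤ k - r - 1 := by omega
        have hcm := Nat.choose_mul (n := n) (k := k - r - 1) (s := k - (r + 1 + u)) h2
        have e4 : n - (k - (r + 1 + u)) = n - k + (r + 1 + u) := by omega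
        have e5 : (k - r - 1) - (k - (r + 1 + u)) = u := by omega
        rw [e4, e5] at hcm
        have e6 : (k - r - 1).choose (k - (r + 1 + u)) = (k - r - 1).choose u := by
          rw [he2, Nat.choose_symm (by omega)]
        rw [e6] at hcm
        exact hcm.symm
      have htriZ : (n.choose (k - (r + 1 + u)) : ℤ) * ((n - k + (r + 1 + u)).choose u : ℤ)
          = (n.choose (k - r - 1) : ℤ) * ((k - r - 1).choose u : ℤ) := by
        exact_mod_cast congrArg (Nat.cast : ℕ → ℤ) htri
      rw [he1, he2, he3]
      calc (n.choose ((k - r - 1) - u) : ℤ) *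
          ((-1 : ℤ) ^ u * ((n - k + (r + 1 + u)).choose u : ℤ) * ((q : ℤ) ^ (r + 1) - 1)) *
          (((k - r - 1) - u).choose ((s - r - 1) - u) : ℤ)
          = ((q : ℤ) ^ (r + 1) - 1) * ((n.choose ((k - r - 1) - u) : ℤ) *
              ((n - k + (r + 1 + u)).choose u : ℤ)) *
              ((-1 : ℤ) ^ u * (((k - r - 1) - u).choose ((s - r - 1) - u) : ℤ)) := by ring
        _ = _ := by
            rw [show k - (r + 1 + u) = (k - r - 1) - u from he2] at htriZ
            rw [htriZ]; ring
    rw [Finset.sum_congr rfl hterm, ← Finset.mul_sum]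
    by_cases hrs : r = s - 1
    · subst hrs
      have : s - (s - 1) = 1 := by omega
      rw [this]
      simp only [Finset.sum_range_one, pow_zero, one_mul, Nat.sub_zero, Nat.choose_zero_right]
      have : k - (s - 1) - 1 = k - s := by omega
      rw [this]
      have hs' : s - 1 + 1 = s := by omega
      rw [hs']
      rw [show ((k - s).choose 0) = 1 from Nat.choose_zero_right _]
      push_cast
      ring
    · have halt := auxNMDS_alt (k - r - 1) (s - r - 1) (by omega) (by omega)
      have hrange : Finset.range (s - r) = Finset.range ((s - r - 1) + 1) := by
        congr 1; omega
      rw [hrange, halt, mul_zero, if_neg hrs]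
  rw [Finset.sum_congr rfl inner, Finset.sum_ite_eq' (Finset.range s) (s - 1)]
  rw [if_pos (Finset.mem_range.mpr (by omega))]

/-- Solving the triangular linear system. -/
lemma auxNMDS_solve (q n k : ℕ) (hk : 1 ≤ k) (hkn : k ≤ n) (a : ℕ → ℤ)
    (hrec : ∀ s, 1 ≤ s → s ≤ k →
      ∑ i ∈ Finset.range (s + 1), a i * ((k - i).choose (s - i) : ℤ)
        = (n.choose (k - s) : ℤ) * ((q : ℤ) ^ s - 1)) :
    ∀ s, 1 ≤ s → s ≤ k →
      a s = (n.choose (k - s) : ℤ) *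
          (∑ j ∈ Finset.range s,
            (-1 : ℤ) ^ j * ((n - k + s).choose j : ℤ) * ((q : ℤ) ^ (s - j) - 1))
        + (-1 : ℤ) ^ s * (k.choose s : ℤ) * a 0 := by
  set B : ℕ → ℤ := fun i => (n.choose (k - i) : ℤ) *
      (∑ j ∈ Finset.range i,
        (-1 : ℤ) ^ j * ((n - k + i).choose j : ℤ) * ((q : ℤ) ^ (i - j) - 1))
    + (-1 : ℤ) ^ i * (k.choose i : ℤ) * a 0 with hB
  have hB0 : B 0 = a 0 := by simp [hB]
  have hBsum : ∀ s, 1 ≤ s → s ≤ k →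
      ∑ i ∈ Finset.range (s + 1), B i * ((k - i).choose (s - i) : ℤ)
        = (n.choose (k - s) : ℤ) * ((q : ℤ) ^ s - 1) := by
    intro s hs hsk
    have expand : ∀ i ∈ Finset.range (s + 1),
        B i * ((k - i).choose (s - i) : ℤ)
          = (n.choose (k - i) : ℤ) *
              (∑ j ∈ Finset.range i,
                (-1 : ℤ) ^ j * ((n - k + i).choose j : ℤ) * ((q : ℤ) ^ (i - j) - 1)) *
              ((k - i).choose (s - i) : ℤ)
            + a 0 * ((-1 : ℤ) ^ i * ((k.choose i : ℤ) * ((k - i).choose (s - i) : ℤ))) := by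
      intro i _
      simp only [hB]; ring
    rw [Finset.sum_congr rfl expand, Finset.sum_add_distrib, ← Finset.mul_sum,
      auxNMDS_alt k s hs hsk, mul_zero, add_zero, auxNMDS_keyQ q n k s hs hsk hkn]
  intro s
  induction s using Nat.strong_induction_on with
  | _ s IH =>
    intro hs hsk
    have hprev : ∀ i < s, i ≤ k → a i = B i := by
      intro i hi hik
      rcases Nat.eq_zero_or_pos i with h0 | h1
      · rw [h0, hB0]
      · exact IH i hi h1 hik
    have h1 := hrec s hs hsk
    have h2 := hBsum s hs hsk
    rw [Finset.sum_range_succ] at h1 h2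
    have h3 : ∑ i ∈ Finset.range s, a i * ((k - i).choose (s - i) : ℤ)
        = ∑ i ∈ Finset.range s, B i * ((k - i).choose (s - i) : ℤ) := by
      refine Finset.sum_congr rfl fun i hi => ?_
      rw [Finset.mem_range] at hi
      rw [hprev i hi (by omega)]
    rw [h3] at h1
    have h4 : a s * ((k - s).choose (s - s) : ℤ) = B s * ((k - s).choose (s - s) : ℤ) := by
      omega
    simpa [Nat.sub_self] using h4

/-- Weight distribution of a near-MDS [n, k, n−k] code over F_q. -/
theorem stmt_7 (q n k : ℕ) (F : Type) [Field F] [Fintype F] [DecidableEq F]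
    (hq : Fintype.card F = q)
    (C : Submodule F (Fin n → F))
    (hdim : Module.finrank F C = k)
    (hk : 1 ≤ k) (hkn : k ≤ n)
    (hd1 : ∀ c ∈ C, c ≠ 0 → n - k ≤ hammingNorm c)
    (hd2 : ∃ c ∈ C, c ≠ 0 ∧ hammingNorm c = n - k)
    (hdual1 : ∀ u : Fin n → F, (∀ c ∈ C, ∑ i, u i * c i = 0) → u ≠ 0 →
      k ≤ hammingNorm u)
    (hdual2 : ∃ u : Fin n → F, (∀ c ∈ C, ∑ i, u i * c i = 0) ∧ u ≠ 0 ∧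
      hammingNorm u = k)
    (A : ℕ → ℕ)
    (hA : ∀ i, A i = Nat.card {c : Fin n → F // c ∈ C ∧ hammingNorm c = i}) :
    ∀ s, 1 ≤ s → s ≤ k →
      (A (n - k + s) : ℤ)
        = (Nat.choose n (k - s) : ℤ) *
            (∑ j ∈ Finset.range s,
              (-1 : ℤ) ^ j * (Nat.choose (n - k + s) j : ℤ) *
                ((q : ℤ) ^ (s - j) - 1))
          + (-1 : ℤ) ^ s * (Nat.choose k s : ℤ) * (A (n - k) : ℤ) := by
  intro s hs1 hsk
  have hq0 : 0 < q := hq ▸ Fintype.card_pos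
  -- the dual distance forces k < n
  have hnk : k < n := by
    rcases lt_or_ge k n with h | h
    · exact h
    · exfalso
      have hE : n = k := le_antisymm h hkn
      obtain ⟨u, huo, hune, _⟩ := hdual2
      have hCtop : C = ⊤ := by
        apply Submodule.eq_top_of_finrank_eq
        rw [hdim, Module.finrank_fintype_fun_eq_card, Fintype.card_fin, hE]
      obtain ⟨i, hi⟩ : ∃ i, u i ≠ 0 := by
        by_contra hko
        push_neg at hko
        exact hune (funext hko)
      have hc : (Pi.single i 1 : Fin n → F) ∈ C := by rw [hCtop]; trivial
      have hz := huo _ hc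
      rw [Finset.sum_eq_single i ?_ ?_] at hz
      · rw [Pi.single_eq_same, mul_one] at hz
        exact hi hz
      · intro b _ hb
        rw [Pi.single_eq_of_ne hb, mul_zero]
      · intro h'
        exact absurd (Finset.mem_univ i) h'
  set a : ℕ → ℤ := fun i => (A (n - k + i) : ℤ) with ha
  have hrecZ : ∀ t, 1 ≤ t → t ≤ k →
      ∑ i ∈ Finset.range (t + 1), a i * ((k - i).choose (t - i) : ℤ)
        = (n.choose (k - t) : ℤ) * ((q : ℤ) ^ t - 1) := by
    intro t h1 h2
    have hc := auxNMDS_count q n k F hq C hdim hk hkn hnk hd1 hdual1 A hA t h1 h2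
    have hchoose : n.choose (n - k + t) = n.choose (k - t) := by
      have h3 : n - k + t ≤ n := by omega
      rw [← Nat.choose_symm h3]
      congr 1
      omega
    rw [hchoose] at hc
    have hcZ := congrArg (Nat.cast (R := ℤ)) hc
    push_cast [Nat.cast_sub (Nat.one_le_pow t q hq0)] at hcZ
    simp only [ha]
    exact hcZ.symm
  have hfin := auxNMDS_solve q n k hk hkn a hrecZ s hs1 hsk
  simpa [ha] using hfin
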